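/- arXiv:1909.08099 — 6 statements merged into one kernel-verified Lean document; each statement's English description precedes it below -/
import Mathlib

section
/- The function x ↦ μ(x) := −min_{‖d‖≤1} max_{i∈{1,…,m}} ∇f_i(x)ᵀd is continuous on ℝⁿ. -/
open scoped RealInnerProductSpace

/-- The multiobjective criticality measure
`μ(x) = - inf_{‖d‖ ≤ 1} max_{i} ⟪∇f_i(x), d⟫`. -/
noncomputable def mu {n m : ℕ} [NeZero m] (f : Fin m → EuclideanSpace ℝ (Fin n) → ℝ)
    (x : EuclideanSpace ℝ (Fin n)) : ℝ :=
  - sInf {y : ℝ | ∃ d : EuclideanSpace ℝ (Fin n), ‖d‖ ≤ 1 ∧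
      Finset.univ.sup' Finset.univ_nonempty (fun i => ⟪gradient (f i) x, d⟫) = y}

section Aux

variable {n m : ℕ} [NeZero m]

noncomputable def Gfun (v : Fin m → EuclideanSpace ℝ (Fin n)) : ℝ :=
  sInf {y : ℝ | ∃ d : EuclideanSpace ℝ (Fin n), ‖d‖ ≤ 1 ∧
      Finset.univ.sup' Finset.univ_nonempty (fun i => ⟪v i, d⟫) = y}

lemma Gfun_set_nonempty (v : Fin m → EuclideanSpace ℝ (Fin n)) :
    ({y : ℝ | ∃ d : EuclideanSpace ℝ (Fin n), ‖d‖ ≤ 1 ∧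
      Finset.univ.sup' Finset.univ_nonempty (fun i => ⟪v i, d⟫) = y}).Nonempty := by
  exact ⟨_, 0, by simp, rfl⟩

lemma Gfun_set_bddBelow (v : Fin m → EuclideanSpace ℝ (Fin n)) :
    BddBelow {y : ℝ | ∃ d : EuclideanSpace ℝ (Fin n), ‖d‖ ≤ 1 ∧
      Finset.univ.sup' Finset.univ_nonempty (fun i => ⟪v i, d⟫) = y} := by
  have i0 : Fin m := ⟨0, Nat.pos_of_ne_zero (NeZero.ne m)⟩
  refine ⟨-‖v i0‖, ?_⟩
  rintro y ⟨d, hd, rfl⟩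
  have h1 : ⟪v i0, d⟫ ≤ Finset.univ.sup' Finset.univ_nonempty (fun i => ⟪v i, d⟫) :=
    Finset.le_sup' (fun i => ⟪v i, d⟫) (Finset.mem_univ i0)
  have h2 : -‖v i0‖ ≤ ⟪v i0, d⟫ := by
    have := abs_real_inner_le_norm (v i0) d
    nlinarith [norm_nonneg (v i0), abs_nonneg ⟪v i0, d⟫, neg_abs_le ⟪v i0, d⟫]
  linarith

lemma Gfun_le (v w : Fin m → EuclideanSpace ℝ (Fin n)) :
    Gfun v ≤ Gfun w + dist v w := by
  rw [← sub_le_iff_le_add]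
  apply le_csInf (Gfun_set_nonempty w)
  rintro y ⟨d, hd, rfl⟩
  rw [sub_le_iff_le_add]
  have h1 : Gfun v ≤ Finset.univ.sup' Finset.univ_nonempty (fun i => ⟪v i, d⟫) :=
    csInf_le (Gfun_set_bddBelow v) ⟨d, hd, rfl⟩
  refine h1.trans ?_
  rw [Finset.sup'_le_iff]
  intro i _
  have h2 : ⟪v i, d⟫ = ⟪w i, d⟫ + ⟪v i - w i, d⟫ := by
    rw [inner_sub_left]; ring
  have h3 : ⟪v i - w i, d⟫ ≤ dist v w := by
    have := real_inner_le_norm (v i - w i) d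
    have h4 : ‖v i - w i‖ ≤ dist v w := by
      rw [← dist_eq_norm]
      exact dist_le_pi_dist v w i
    nlinarith [norm_nonneg (v i - w i), dist_nonneg (x := v) (y := w)]
  have h5 : ⟪w i, d⟫ ≤ Finset.univ.sup' Finset.univ_nonempty (fun i => ⟪w i, d⟫) :=
    Finset.le_sup' (fun i => ⟪w i, d⟫) (Finset.mem_univ i)
  linarith

lemma Gfun_lipschitz : LipschitzWith 1 (Gfun (n := n) (m := m)) := by
  apply LipschitzWith.of_dist_le_mul
  intro v w
  rw [Real.dist_eq, NNReal.coe_one, one_mul, abs_sub_le_iff]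
  constructor
  · linarith [Gfun_le v w]
  · have := Gfun_le w v
    rw [dist_comm] at this
    linarith

end Aux

theorem stmt4 {n m : ℕ} [NeZero m] (f : Fin m → EuclideanSpace ℝ (Fin n) → ℝ)
    (hf : ∀ i, ContDiff ℝ 1 (f i)) :
    Continuous (fun x => mu f x) := by
  have hgrad : ∀ i, Continuous (fun x => gradient (f i) x) := by
    intro i
    have h1 : Continuous (fun x => fderiv ℝ (f i) x) :=
      (hf i).continuous_fderiv one_ne_zero
    exact ((InnerProductSpace.toDual ℝ
      (EuclideanSpace ℝ (Fin n))).symm.continuous).comp h1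
  have hG : Continuous (fun x => Gfun (fun i => gradient (f i) x)) :=
    Gfun_lipschitz.continuous.comp (continuous_pi hgrad)
  have : (fun x => mu f x) = fun x => - Gfun (fun i => gradient (f i) x) := by
    funext x; rfl
  rw [this]
  exact hG.neg
end

section
/- Suppose at a point x_k and stepsize α_k > 0, for every direction d in a finite set D_k of vectors with ‖d‖ ≤ 1 there exists an index i(d) ∈ {1,…,m} with f_{i(d)}(x_k + α_k d) ≥ f_{i(d)}(x_k) − ρ(α_k), where ρ : (0,∞) → (0,∞). Then μ_{D_k}(x_k) := −min_{d∈D_k} max_{i∈{1,…,m}} ∇f_i(x_k)ᵀd satisfies μ_{D_k}(x_k) ≤ (L_max/2)·α_k + ρ(α_k)/α_k. -/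
open scoped RealInnerProductSpace

private lemma descent_aux {n : ℕ} (g : EuclideanSpace ℝ (Fin n) → ℝ)
    (hg : ContDiff ℝ 1 g) (L : NNReal) (hL : LipschitzWith L (gradient g))
    (x d : EuclideanSpace ℝ (Fin n)) (α : ℝ) (hα : 0 ≤ α) :
    g (x + α • d) ≤ g x + α * ⟪gradient g x, d⟫ + (L : ℝ) / 2 * α ^ 2 * ‖d‖ ^ 2 := by
  have hdiff : ∀ y : EuclideanSpace ℝ (Fin n), DifferentiableAt ℝ g y := fun y =>
    (hg.differentiable one_ne_zero).differentiableAt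
  have hderiv : ∀ t : ℝ, HasDerivAt (fun t => g (x + t • d))
      (⟪gradient g (x + t • d), d⟫) t := by
    intro t
    have h1 : HasDerivAt (fun t : ℝ => x + t • d) d t := by
      simpa using ((hasDerivAt_id t).smul_const d).const_add x
    have h2 := (hdiff (x + t • d)).hasGradientAt
    have h3 := h2.hasFDerivAt.comp_hasDerivAt t h1
    have h4 : HasDerivAt (fun t => g (x + t • d))
        ((InnerProductSpace.toDual ℝ _ (gradient g (x + t • d))) d) t := h3
    simpa only [InnerProductSpace.toDual_apply_apply] using h4
  have hgradcont : Continuous (gradient g) := hL.continuous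
  have hcont : Continuous fun t : ℝ => ⟪gradient g (x + t • d), d⟫ :=
    (hgradcont.comp (by continuity)).inner continuous_const
  have key : g (x + α • d) - g x = ∫ t in (0:ℝ)..α, ⟪gradient g (x + t • d), d⟫ := by
    have := intervalIntegral.integral_eq_sub_of_hasDerivAt
      (f := fun t => g (x + t • d)) (a := 0) (b := α)
      (fun t _ => hderiv t) (hcont.intervalIntegrable 0 α)
    simp only [zero_smul, add_zero] at this
    exact this.symm
  have bound : ∀ t ∈ Set.Icc (0:ℝ) α,
      ⟪gradient g (x + t • d), d⟫ ≤ ⟪gradient g x, d⟫ + (L : ℝ) * ‖d‖ ^ 2 * t := by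
    intro t ht
    have h1 : ⟪gradient g (x + t • d), d⟫ - ⟪gradient g x, d⟫
        = ⟪gradient g (x + t • d) - gradient g x, d⟫ := by
      rw [inner_sub_left]
    have h2 : ⟪gradient g (x + t • d) - gradient g x, d⟫
        ≤ ‖gradient g (x + t • d) - gradient g x‖ * ‖d‖ :=
      real_inner_le_norm _ _
    have h3 : ‖gradient g (x + t • d) - gradient g x‖ ≤ (L : ℝ) * (t * ‖d‖) := by
      have := hL.dist_le_mul (x + t • d) x
      rw [dist_eq_norm] at this
      simpa [norm_smul, abs_of_nonneg ht.1] using this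
    nlinarith [norm_nonneg d, norm_nonneg (gradient g (x + t • d) - gradient g x), ht.1,
      mul_le_mul_of_nonneg_right h3 (norm_nonneg d)]
  have hint : (∫ t in (0:ℝ)..α, ⟪gradient g (x + t • d), d⟫)
      ≤ ∫ t in (0:ℝ)..α, (⟪gradient g x, d⟫ + (L : ℝ) * ‖d‖ ^ 2 * t) := by
    apply intervalIntegral.integral_mono_on hα (hcont.intervalIntegrable 0 α)
      ((continuous_const.add (continuous_const.mul continuous_id')).intervalIntegrable 0 α)
    exact bound
  have hrhs : (∫ t in (0:ℝ)..α, (⟪gradient g x, d⟫ + (L : ℝ) * ‖d‖ ^ 2 * t))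
      = α * ⟪gradient g x, d⟫ + (L : ℝ) / 2 * α ^ 2 * ‖d‖ ^ 2 := by
    rw [intervalIntegral.integral_add (g := fun t : ℝ => (L : ℝ) * ‖d‖ ^ 2 * t)
      intervalIntegrable_const
      ((continuous_const.mul continuous_id').intervalIntegrable 0 α),
      intervalIntegral.integral_const_mul, integral_id,
      intervalIntegral.integral_const]
    simp
    ring
  linarith [key, hint, hrhs.symm.le]

theorem stmt6 {n m : ℕ} [NeZero m] (f : Fin m → EuclideanSpace ℝ (Fin n) → ℝ)
    (L : Fin m → NNReal)
    (hf : ∀ i, ContDiff ℝ 1 (f i))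
    (hLip : ∀ i, LipschitzWith (L i) (gradient (f i)))
    (D : Finset (EuclideanSpace ℝ (Fin n))) (hD : D.Nonempty)
    (hDnorm : ∀ d ∈ D, ‖d‖ ≤ 1)
    (x : EuclideanSpace ℝ (Fin n)) (α : ℝ) (hα : 0 < α)
    (ρ : ℝ → ℝ) (hρ : ∀ t > (0:ℝ), 0 < ρ t)
    (hunsucc : ∀ d ∈ D, ∃ i, f i (x + α • d) ≥ f i x - ρ α) :
    - D.inf' hD (fun d =>
        Finset.univ.sup' Finset.univ_nonempty (fun i => ⟪gradient (f i) x, d⟫)) ≤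
      ((Finset.univ.sup' Finset.univ_nonempty L : NNReal) : ℝ) / 2 * α + ρ α / α := by
  obtain ⟨d, hdD, hdeq⟩ := Finset.exists_mem_eq_inf' hD
    (fun d => Finset.univ.sup' Finset.univ_nonempty (fun i => ⟪gradient (f i) x, d⟫))
  obtain ⟨i, hi⟩ := hunsucc d hdD
  set M : ℝ := ((Finset.univ.sup' Finset.univ_nonempty L : NNReal) : ℝ) with hM
  have hLi : (L i : ℝ) ≤ M := by
    exact_mod_cast Finset.le_sup' L (Finset.mem_univ i)
  have hdesc := descent_aux (f i) (hf i) (L i) (hLip i) x d α hα.le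
  have hsup : ⟪gradient (f i) x, d⟫ ≤
      Finset.univ.sup' Finset.univ_nonempty (fun j => ⟪gradient (f j) x, d⟫) :=
    Finset.le_sup' (fun j => ⟪gradient (f j) x, d⟫) (Finset.mem_univ i)
  have hnd : ‖d‖ ^ 2 ≤ 1 := by
    have := hDnorm d hdD
    nlinarith [norm_nonneg d]
  have h1 : -ρ α ≤ α * ⟪gradient (f i) x, d⟫ + (L i : ℝ) / 2 * α ^ 2 * ‖d‖ ^ 2 := by
    linarith [hi, hdesc]
  have h2 : (L i : ℝ) / 2 * α ^ 2 * ‖d‖ ^ 2 ≤ M / 2 * α ^ 2 := by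
    have hL0 : (0:ℝ) ≤ (L i : ℝ) := (L i).coe_nonneg
    have t1 : (L i : ℝ) / 2 * α ^ 2 * ‖d‖ ^ 2 ≤ (L i : ℝ) / 2 * α ^ 2 * 1 :=
      mul_le_mul_of_nonneg_left hnd (by positivity)
    have t2 : (L i : ℝ) / 2 * α ^ 2 ≤ M / 2 * α ^ 2 :=
      mul_le_mul_of_nonneg_right (by linarith) (sq_nonneg α)
    linarith
  rw [hdeq, neg_le]
  have h3 : α * (-(M / 2 * α + ρ α / α)) ≤ α * ⟪gradient (f i) x, d⟫ := by
    have hc : α * (ρ α / α) = ρ α := mul_div_cancel₀ _ hα.ne'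
    nlinarith [h1, h2]
  have h4 := le_of_mul_le_mul_left h3 hα
  exact h4.trans hsup
end

section
/- Suppose at a point x_k and stepsize α_k > 0, for every direction d in a finite set D_k of vectors with ‖d‖ ≤ 1 there exists an index i(d) ∈ {1,…,m} with f_{i(d)}(x_k + α_k d) ≥ f_{i(d)}(x_k) − (c/2)α_k². Then μ_{D_k}(x_k) := −min_{d∈D_k} max_{i∈{1,…,m}} ∇f_i(x_k)ᵀd satisfies μ_{D_k}(x_k) ≤ (1/2)(L_max + c)·α_k. -/
open scoped RealInnerProductSpace

/-- Descent lemma: quadratic upper bound for a function with Lipschitz gradient. -/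
lemma descent_lemma {E : Type*} [NormedAddCommGroup E] [InnerProductSpace ℝ E]
    [CompleteSpace E] (f : E → ℝ) (hf : ContDiff ℝ 1 f) (L : NNReal)
    (hLip : LipschitzWith L (gradient f)) (x v : E) :
    f (x + v) ≤ f x + ⟪gradient f x, v⟫ + (L : ℝ) / 2 * ‖v‖ ^ 2 := by
  set K : ℝ := (L : ℝ) * ‖v‖ ^ 2 with hK
  set φ : ℝ → ℝ := fun t => f (x + t • v) - t * ⟪gradient f x, v⟫ - t ^ 2 * (K / 2) with hφ
  have hgrad : ∀ y : E, HasFDerivAt f (InnerProductSpace.toDual ℝ E (gradient f y)) y := by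
    intro y
    exact ((hf.differentiable one_ne_zero).differentiableAt.hasGradientAt (x := y))
  have hder : ∀ t : ℝ, HasDerivAt φ
      (⟪gradient f (x + t • v), v⟫ - ⟪gradient f x, v⟫ - t * K) t := by
    intro t
    have hline : HasDerivAt (fun t : ℝ => x + t • v) v t :=
      by simpa using ((hasDerivAt_id t).smul_const v).const_add x
    have h1 : HasDerivAt (fun t : ℝ => f (x + t • v)) ⟪gradient f (x + t • v), v⟫ t := by
      have := (hgrad (x + t • v)).comp_hasDerivAt t hline
      simpa [InnerProductSpace.toDual_apply_apply, Function.comp_def] using this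
    have h2 : HasDerivAt (fun t : ℝ => t * ⟪gradient f x, v⟫) ⟪gradient f x, v⟫ t := by
      simpa using (hasDerivAt_id t).mul_const ⟪gradient f x, v⟫
    have h3 : HasDerivAt (fun t : ℝ => t ^ 2 * (K / 2)) (t * K) t := by
      have := (hasDerivAt_pow 2 t).mul_const (K / 2)
      refine this.congr_deriv ?_
      ring
    exact (h1.sub h2).sub h3
  have hderiv_nonpos : ∀ t ∈ Set.Icc (0:ℝ) 1, deriv φ t ≤ 0 := by
    intro t ht
    rw [(hder t).deriv]
    have hineq : ⟪gradient f (x + t • v) - gradient f x, v⟫ ≤ t * K := by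
      calc ⟪gradient f (x + t • v) - gradient f x, v⟫
          ≤ ‖gradient f (x + t • v) - gradient f x‖ * ‖v‖ := real_inner_le_norm _ _
        _ ≤ ((L : ℝ) * ‖(x + t • v) - x‖) * ‖v‖ := by
            gcongr
            exact hLip.norm_sub_le _ _
        _ = t * K := by
            simp only [add_sub_cancel_left, norm_smul, Real.norm_eq_abs,
              abs_of_nonneg ht.1, hK]
            ring
    have := (inner_sub_left (𝕜 := ℝ) (gradient f (x + t • v)) (gradient f x) v)
    linarith [hineq, this.symm.le, this.le]
  have hdiff : Differentiable ℝ φ := fun t => (hder t).differentiableAt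
  have hanti : AntitoneOn φ (Set.Icc (0:ℝ) 1) :=
    antitoneOn_of_deriv_nonpos (convex_Icc 0 1) hdiff.continuous.continuousOn
      hdiff.differentiableOn (fun t ht => hderiv_nonpos t (interior_subset ht))
  have h01 : φ 1 ≤ φ 0 := hanti (by norm_num) (by norm_num) zero_le_one
  simp only [hφ, one_smul, zero_smul, add_zero, one_pow, one_mul, zero_mul,
    zero_pow, sub_zero] at h01
  have : K / 2 = (L : ℝ) / 2 * ‖v‖ ^ 2 := by rw [hK]; ring
  linarith

theorem stmt7 {n m : ℕ} [NeZero m] (f : Fin m → EuclideanSpace ℝ (Fin n) → ℝ)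
    (L : Fin m → NNReal)
    (hf : ∀ i, ContDiff ℝ 1 (f i))
    (hLip : ∀ i, LipschitzWith (L i) (gradient (f i)))
    (D : Finset (EuclideanSpace ℝ (Fin n))) (hD : D.Nonempty)
    (hDnorm : ∀ d ∈ D, ‖d‖ ≤ 1)
    (x : EuclideanSpace ℝ (Fin n)) (α : ℝ) (hα : 0 < α)
    (c : ℝ) (hc : 0 < c)
    (hunsucc : ∀ d ∈ D, ∃ i, f i (x + α • d) ≥ f i x - c / 2 * α ^ 2) :
    - D.inf' hD (fun d =>
        Finset.univ.sup' Finset.univ_nonempty (fun i => ⟪gradient (f i) x, d⟫)) ≤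
      1 / 2 * (((Finset.univ.sup' Finset.univ_nonempty L : NNReal) : ℝ) + c) * α := by
  obtain ⟨d, hdD, hdeq⟩ := Finset.exists_mem_eq_inf' hD
    (fun d => Finset.univ.sup' Finset.univ_nonempty (fun i => ⟪gradient (f i) x, d⟫))
  obtain ⟨i, hi⟩ := hunsucc d hdD
  have hdesc := descent_lemma (f i) (hf i) (L i) (hLip i) x (α • d)
  rw [real_inner_smul_right] at hdesc
  have hnorm : ‖α • d‖ ^ 2 ≤ α ^ 2 := by
    rw [norm_smul, Real.norm_eq_abs, abs_of_pos hα, mul_pow]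
    have h1 : ‖d‖ ^ 2 ≤ 1 := by nlinarith [hDnorm d hdD, norm_nonneg d]
    nlinarith [sq_nonneg α]
  have hLle : (L i : ℝ) ≤ ((Finset.univ.sup' Finset.univ_nonempty L : NNReal) : ℝ) :=
    NNReal.coe_le_coe.mpr (Finset.le_sup' L (Finset.mem_univ i))
  have hkey : -(((Finset.univ.sup' Finset.univ_nonempty L : NNReal) : ℝ) + c) / 2 * α ≤
      ⟪gradient (f i) x, d⟫ := by
    have hL0 : (0:ℝ) ≤ (L i : ℝ) := (L i).coe_nonneg
    have h1 : - (c / 2 + (L i : ℝ) / 2) * α ^ 2 ≤ α * ⟪gradient (f i) x, d⟫ := by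
      nlinarith [hi, hdesc, hnorm]
    nlinarith [h1, hLle, hα, mul_pos hα hα, sq_nonneg α]
  have hsup : ⟪gradient (f i) x, d⟫ ≤
      Finset.univ.sup' Finset.univ_nonempty (fun i => ⟪gradient (f i) x, d⟫) :=
    Finset.le_sup' (fun j => (⟪gradient (f j) x, d⟫ : ℝ)) (Finset.mem_univ i)
  rw [hdeq]
  nlinarith [hkey, hsup]
end

section
/- Let a sequence of stepsizes satisfy: for each k, either (successful iteration) f(x_{k+1}) ≤ f(x_k) − (c/2)α_k² and α_{k+1} ∈ [α_k, γα_k], or (unsuccessful) x_{k+1} = x_k and α_{k+1} ∈ [β₁α_k, β₂α_k], where 0 < β₁ ≤ β₂ < 1, γ ≥ 1, c > 0, and f is bounded below by F_min on the relevant set. Then ∑_{k=0}^∞ α_k² ≤ Ω := (γ²/(1−β₂²))·(γ^{−2}α_0² + (2/c)(f(x_0) − F_min)). -/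
theorem stmt9 {n : ℕ} (f : EuclideanSpace ℝ (Fin n) → ℝ)
    (x : ℕ → EuclideanSpace ℝ (Fin n)) (α : ℕ → ℝ)
    (c γ β₁ β₂ Fmin : ℝ)
    (hβ₁ : 0 < β₁) (hβ₁₂ : β₁ ≤ β₂) (hβ₂ : β₂ < 1) (hγ : 1 ≤ γ) (hc : 0 < c)
    (hα0 : 0 < α 0)
    (hbound : ∀ k, Fmin ≤ f (x k))
    (hstep : ∀ k,
      (f (x (k+1)) ≤ f (x k) - c / 2 * α k ^ 2 ∧
        α k ≤ α (k+1) ∧ α (k+1) ≤ γ * α k) ∨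
      (x (k+1) = x k ∧ β₁ * α k ≤ α (k+1) ∧ α (k+1) ≤ β₂ * α k)) :
    ∑' k, α k ^ 2 ≤
      γ ^ 2 / (1 - β₂ ^ 2) * (γ⁻¹ ^ 2 * α 0 ^ 2 + 2 / c * (f (x 0) - Fmin)) := by
  have hγ0 : (0:ℝ) < γ := lt_of_lt_of_le one_pos hγ
  have hβ₂0 : (0:ℝ) < β₂ := lt_of_lt_of_le hβ₁ hβ₁₂
  have hβ₂sq : β₂ ^ 2 < 1 := by nlinarith
  have hαpos : ∀ k, 0 < α k := by
    intro k
    induction k with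
    | zero => exact hα0
    | succ k ih =>
      rcases hstep k with ⟨_, h1, _⟩ | ⟨_, h1, _⟩
      · linarith
      · nlinarith
  have key : ∀ k, α (k+1) ^ 2 ≤
      γ ^ 2 * (2 / c * (f (x k) - f (x (k+1)))) + β₂ ^ 2 * α k ^ 2 := by
    intro k
    have hk := hαpos k
    have hk1 := hαpos (k+1)
    rcases hstep k with ⟨h0, h1, h2⟩ | ⟨h0, h1, h2⟩
    · have h3 : α (k+1) ^ 2 ≤ γ ^ 2 * α k ^ 2 := by nlinarith
      have h4 : α k ^ 2 ≤ 2 / c * (f (x k) - f (x (k+1))) := by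
        rw [div_mul_eq_mul_div, le_div_iff₀ hc]; nlinarith
      nlinarith [mul_le_mul_of_nonneg_left h4 (sq_nonneg γ), sq_nonneg (β₂ * α k)]
    · rw [h0]
      have h3 : α (k+1) ^ 2 ≤ β₂ ^ 2 * α k ^ 2 := by nlinarith
      nlinarith
  have hΔ : 0 ≤ f (x 0) - Fmin := sub_nonneg.2 (hbound 0)
  have hSbound : ∀ N, ∑ k ∈ Finset.range N, α k ^ 2 ≤
      (α 0 ^ 2 + γ ^ 2 * (2 / c * (f (x 0) - Fmin))) / (1 - β₂ ^ 2) := by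
    intro N
    set S : ℝ := ∑ k ∈ Finset.range N, α k ^ 2 with hS
    have h1 : ∑ k ∈ Finset.range N, α (k+1) ^ 2 ≤
        γ ^ 2 * (2 / c * (f (x 0) - f (x N))) + β₂ ^ 2 * S := by
      calc ∑ k ∈ Finset.range N, α (k+1) ^ 2
          ≤ ∑ k ∈ Finset.range N,
            (γ ^ 2 * (2 / c * (f (x k) - f (x (k+1)))) + β₂ ^ 2 * α k ^ 2) :=
            Finset.sum_le_sum (fun k _ => key k)
        _ = γ ^ 2 * (2 / c * ∑ k ∈ Finset.range N, (f (x k) - f (x (k+1))))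
              + β₂ ^ 2 * S := by
            rw [Finset.sum_add_distrib, ← Finset.mul_sum, ← Finset.mul_sum,
              ← Finset.mul_sum]
        _ = γ ^ 2 * (2 / c * (f (x 0) - f (x N))) + β₂ ^ 2 * S := by
            rw [Finset.sum_range_sub' (fun k => f (x k))]
    have h2 : γ ^ 2 * (2 / c * (f (x 0) - f (x N))) ≤
        γ ^ 2 * (2 / c * (f (x 0) - Fmin)) := by
      gcongr
      exact hbound N
    have h3 : (∑ k ∈ Finset.range (N+1), α k ^ 2) =
        (∑ k ∈ Finset.range N, α (k+1) ^ 2) + α 0 ^ 2 :=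
      Finset.sum_range_succ' (fun k => α k ^ 2) N
    have h4 : S ≤ ∑ k ∈ Finset.range (N+1), α k ^ 2 := by
      rw [Finset.sum_range_succ]
      nlinarith [sq_nonneg (α N)]
    rw [le_div_iff₀ (by linarith : (0:ℝ) < 1 - β₂ ^ 2)]
    nlinarith
  have heq : γ ^ 2 / (1 - β₂ ^ 2) * (γ⁻¹ ^ 2 * α 0 ^ 2 + 2 / c * (f (x 0) - Fmin)) =
      (α 0 ^ 2 + γ ^ 2 * (2 / c * (f (x 0) - Fmin))) / (1 - β₂ ^ 2) := by
    have hγne : γ ≠ 0 := ne_of_gt hγ0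
    have hγi : γ ^ 2 * γ⁻¹ ^ 2 = 1 := by
      rw [← mul_pow, mul_inv_cancel₀ hγne, one_pow]
    rw [div_mul_eq_mul_div]
    congr 1
    linear_combination α 0 ^ 2 * hγi
  rw [heq]
  exact Real.tsum_le_of_sum_range_le (fun k => sq_nonneg _) hSbound
end

section
/- In the min-max direct-search algorithm, for any unsuccessful iteration k with μ_k > ε and satisfying |μ_{D_k} − μ_k| ≤ C₁·μ_{D_k}, the stepsize satisfies α_k² ≥ 4ε²/((L_max + c)²(C₁ + 1)²). -/
open scoped RealInnerProductSpace


lemma descent {n : ℕ} (f : EuclideanSpace ℝ (Fin n) → ℝ) (L : NNReal)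
    (hf : ContDiff ℝ 1 f) (hLip : LipschitzWith L (gradient f))
    (x v : EuclideanSpace ℝ (Fin n)) :
    f (x + v) ≤ f x + ⟪gradient f x, v⟫ + (L : ℝ) / 2 * ‖v‖ ^ 2 := by
  have hdiff : Differentiable ℝ f := hf.differentiable one_ne_zero
  have hderiv : ∀ t : ℝ, HasDerivAt (fun t : ℝ => f (x + t • v))
      ⟪gradient f (x + t • v), v⟫ t := by
    intro t
    have h1 : HasFDerivAt f
        ((InnerProductSpace.toDual ℝ _) (gradient f (x + t • v))) (x + t • v) :=
      (hdiff _).hasGradientAt.hasFDerivAt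
    have h2 : HasDerivAt (fun t : ℝ => x + t • v) v t := by
      simpa using ((hasDerivAt_id t).smul_const v).const_add x
    have h3 := h1.comp_hasDerivAt t h2
    rw [InnerProductSpace.toDual_apply_apply] at h3
    exact h3
  have hcont : Continuous fun t : ℝ => ⟪gradient f (x + t • v), v⟫ :=
    (hLip.continuous.comp (continuous_const.add (continuous_id.smul continuous_const))).inner
      continuous_const
  have key : f (x + v) - f x = ∫ t in (0:ℝ)..1, ⟪gradient f (x + t • v), v⟫ := by
    have := intervalIntegral.integral_eq_sub_of_hasDerivAt
      (fun t _ => hderiv t) (hcont.intervalIntegrable 0 1)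
    simpa using this.symm
  have hA : ⟪gradient f x, v⟫ = ⟪gradient f x, v⟫ := rfl
  have hbound : ∀ t ∈ Set.Icc (0:ℝ) 1,
      ⟪gradient f (x + t • v), v⟫ ≤ ⟪gradient f x, v⟫ + ((L : ℝ) * ‖v‖ ^ 2) * t := by
    intro t ht
    have h1 : ⟪gradient f (x + t • v) - gradient f x, v⟫
        ≤ ‖gradient f (x + t • v) - gradient f x‖ * ‖v‖ := real_inner_le_norm _ _
    have h2 : ‖gradient f (x + t • v) - gradient f x‖ ≤ (L : ℝ) * (t * ‖v‖) := by
      have h3 := hLip.dist_le_mul (x + t • v) x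
      have h4 : dist (x + t • v) x = t * ‖v‖ := by
        rw [dist_eq_norm]
        simp [norm_smul, abs_of_nonneg ht.1]
      rw [dist_eq_norm, h4] at h3
      exact h3
    have h5 := inner_sub_left (𝕜 := ℝ) (gradient f (x + t • v)) (gradient f x) v
    have hv : (0:ℝ) ≤ ‖v‖ := norm_nonneg v
    nlinarith [mul_le_mul_of_nonneg_right h2 hv]
  have hint : (∫ t in (0:ℝ)..1, ⟪gradient f (x + t • v), v⟫) ≤ ∫ t in (0:ℝ)..1, (⟪gradient f x, v⟫ + ((L : ℝ) * ‖v‖ ^ 2) * t) := by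
    apply intervalIntegral.integral_mono_on (by norm_num)
      (hcont.intervalIntegrable 0 1)
      ((continuous_const.add (continuous_const.mul continuous_id)).intervalIntegrable 0 1)
      hbound
  have hval : (∫ t in (0:ℝ)..1, (⟪gradient f x, v⟫ + ((L : ℝ) * ‖v‖ ^ 2) * t)) = ⟪gradient f x, v⟫ + ((L : ℝ) * ‖v‖ ^ 2) / 2 := by
    have h1 : IntervalIntegrable (fun t : ℝ => ((L : ℝ) * ‖v‖ ^ 2) * t) MeasureTheory.volume 0 1 :=
      (continuous_const.mul continuous_id).intervalIntegrable 0 1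
    rw [intervalIntegral.integral_add intervalIntegrable_const h1,
      intervalIntegral.integral_const_mul, integral_id]
    simp
    ring
  nlinarith [key, hint, hval]

/-- The approximate criticality measure over a finite set of poll directions. -/
noncomputable def muD {n m : ℕ} [NeZero m] (f : Fin m → EuclideanSpace ℝ (Fin n) → ℝ)
    (D : Finset (EuclideanSpace ℝ (Fin n))) (hD : D.Nonempty)
    (x : EuclideanSpace ℝ (Fin n)) : ℝ :=
  - D.inf' hD (fun d =>
      Finset.univ.sup' Finset.univ_nonempty (fun i => ⟪gradient (f i) x, d⟫))

/-- The min-max objective `f(x) = max_i f_i(x)`. -/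
noncomputable def fmax {n m : ℕ} [NeZero m] (f : Fin m → EuclideanSpace ℝ (Fin n) → ℝ)
    (x : EuclideanSpace ℝ (Fin n)) : ℝ :=
  Finset.univ.sup' Finset.univ_nonempty (fun i => f i x)

theorem stmt14 {n m : ℕ} [NeZero m] (f : Fin m → EuclideanSpace ℝ (Fin n) → ℝ)
    (L : Fin m → NNReal)
    (hf : ∀ i, ContDiff ℝ 1 (f i))
    (hLip : ∀ i, LipschitzWith (L i) (gradient (f i)))
    (D : Finset (EuclideanSpace ℝ (Fin n))) (hD : D.Nonempty)
    (hDnorm : ∀ d ∈ D, ‖d‖ ≤ 1)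
    (x : EuclideanSpace ℝ (Fin n)) (α : ℝ) (hα : 0 < α)
    (c C₁ ε : ℝ) (hc : 0 < c) (hC₁ : 0 < C₁) (hε : 0 < ε)
    (hunsucc : ∀ d ∈ D, fmax f (x + α • d) ≥ fmax f x - c / 2 * α ^ 2)
    (hmu : mu f x > ε)
    (hC : |muD f D hD x - mu f x| ≤ C₁ * muD f D hD x) :
    α ^ 2 ≥ 4 * ε ^ 2 /
      ((((Finset.univ.sup' Finset.univ_nonempty L : NNReal) : ℝ) + c) ^ 2 *
        (C₁ + 1) ^ 2) := by
  set Lmax : ℝ := ((Finset.univ.sup' Finset.univ_nonempty L : NNReal) : ℝ) with hLmaxdef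
  have hLmax0 : 0 ≤ Lmax := NNReal.coe_nonneg _
  set g : EuclideanSpace ℝ (Fin n) → ℝ := fun d =>
    Finset.univ.sup' Finset.univ_nonempty (fun i => ⟪gradient (f i) x, d⟫) with hgdef
  have hgd : ∀ d ∈ D, -(g d) ≤ (Lmax + c) / 2 * α := by
    intro d hd
    have hfd : fmax f (x + α • d) ≤ fmax f x + α * g d + Lmax / 2 * α ^ 2 := by
      apply Finset.sup'_le
      intro i _
      have h1 := descent (f i) (L i) (hf i) (hLip i) x (α • d)
      have h2 : f i x ≤ fmax f x := by
        unfold fmax; exact Finset.le_sup' (fun j => f j x) (Finset.mem_univ i)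
      have h3 : ⟪gradient (f i) x, d⟫ ≤ g d := by
        rw [hgdef]; exact Finset.le_sup' (fun j => ⟪gradient (f j) x, d⟫) (Finset.mem_univ i)
      have h4 : ⟪gradient (f i) x, α • d⟫ = α * ⟪gradient (f i) x, d⟫ :=
        real_inner_smul_right _ _ _
      have h5 : ‖α • d‖ ^ 2 ≤ α ^ 2 := by
        rw [norm_smul, Real.norm_eq_abs, abs_of_pos hα]
        have hd1 := hDnorm d hd
        have hn : 0 ≤ ‖d‖ := norm_nonneg d
        have h0 : ‖d‖ ^ 2 ≤ 1 := by nlinarith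
        nlinarith [sq_nonneg α, mul_le_mul_of_nonneg_left h0 (sq_nonneg α)]
      have h6 : (L i : ℝ) ≤ Lmax := by
        rw [hLmaxdef]
        exact_mod_cast Finset.le_sup' L (Finset.mem_univ i)
      have h7 : (0:ℝ) ≤ (L i : ℝ) := (L i).coe_nonneg
      have h8 : (0:ℝ) ≤ ‖α • d‖ ^ 2 := sq_nonneg _
      nlinarith [sq_nonneg α, mul_le_mul_of_nonneg_left h5 h7]
    have h9 := hunsucc d hd
    have h10 : -(α * g d) ≤ (Lmax + c) / 2 * α ^ 2 := by nlinarith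
    rw [← mul_le_mul_iff_right₀ hα]
    nlinarith
  have hmuD : muD f D hD x ≤ (Lmax + c) / 2 * α := by
    unfold muD
    rw [neg_le]
    apply Finset.le_inf'
    intro d hd
    have := hgd d hd
    simp only [hgdef] at this
    linarith
  have habs := abs_le.mp hC
  have hmu2 : mu f x ≤ (C₁ + 1) * muD f D hD x := by
    have := habs.1
    nlinarith
  have h11 : ε < (C₁ + 1) * ((Lmax + c) / 2 * α) := by
    have h12 : (C₁ + 1) * muD f D hD x ≤ (C₁ + 1) * ((Lmax + c) / 2 * α) :=
      mul_le_mul_of_nonneg_left hmuD (by linarith)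
    linarith
  have hK : (0:ℝ) < (Lmax + c) ^ 2 * (C₁ + 1) ^ 2 := by positivity
  rw [ge_iff_le, div_le_iff₀ hK]
  have h13 : ε * ε < ((C₁ + 1) * ((Lmax + c) / 2 * α)) * ((C₁ + 1) * ((Lmax + c) / 2 * α)) :=
    mul_lt_mul'' h11 h11 hε.le hε.le
  nlinarith [h13]
end

section
/- Consider stepsizes along a linked sequence satisfying α_{k+1} ≤ β₂·α_k at unsuccessful iterations and α_{k+1} ≤ γ·α_k at successful iterations, with 0 < β₂ < 1 ≤ γ. If the sequence contains |S| successful and |U| unsuccessful iterations starting from initial stepsize α₁, the final stepsize α_n satisfies α_n ≤ α₁·γ^{|S|}·β₂^{|U|}; consequently, if α_n ≥ β₁·L₂·ε^{1/min(p−1,1)} for a lower bound on stepsizes, then |U| ≤ −(log γ / log β₂)·|S| − log(α₁)/log β₂ + log(β₁·L₂·ε^{1/min(p−1,1)})/log β₂. -/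
theorem stmt15 (α : ℕ → ℝ) (N : ℕ) (succ : ℕ → Prop) [DecidablePred succ]
    (β₁ β₂ γ L₂ ε p : ℝ)
    (hβ₁ : 0 < β₁) (hβ₁₂ : β₁ ≤ β₂) (hβ₂ : β₂ < 1) (hγ : 1 ≤ γ)
    (hp : 1 < p) (hL₂ : 0 < L₂) (hε : 0 < ε) (hε1 : ε < 1)
    (hα0 : 0 < α 0)
    (hstep : ∀ k < N,
      (succ k → α (k + 1) ≤ γ * α k) ∧ (¬ succ k → α (k + 1) ≤ β₂ * α k)) :
    α N ≤ α 0 * γ ^ ((Finset.range N).filter succ).card *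
        β₂ ^ ((Finset.range N).filter (fun k => ¬ succ k)).card ∧
      (α N ≥ β₁ * L₂ * ε ^ (1 / min (p - 1) 1) →
        ((((Finset.range N).filter (fun k => ¬ succ k)).card : ℝ) ≤
          -(Real.log γ / Real.log β₂) * (((Finset.range N).filter succ).card : ℝ)
          - Real.log (α 0) / Real.log β₂
          + Real.log (β₁ * L₂ * ε ^ (1 / min (p - 1) 1)) / Real.log β₂)) := by
  have hβ₂0 : 0 < β₂ := lt_of_lt_of_le hβ₁ hβ₁₂
  have hγ0 : 0 < γ := lt_of_lt_of_le one_pos hγ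
  have main : α N ≤ α 0 * γ ^ ((Finset.range N).filter succ).card *
      β₂ ^ ((Finset.range N).filter (fun k => ¬ succ k)).card := by
    induction N with
    | zero => simp
    | succ n ih =>
      have ih' := ih (fun k hk => hstep k (Nat.lt_succ_of_lt hk))
      have hs := hstep n (Nat.lt_succ_self n)
      have hpos : 0 < α 0 * γ ^ ((Finset.range n).filter succ).card *
          β₂ ^ ((Finset.range n).filter (fun k => ¬ succ k)).card := by positivity
      rw [Finset.range_add_one, Finset.filter_insert, Finset.filter_insert]
      by_cases hn : succ n
      · simp only [hn, not_true, if_true, if_false]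
        rw [Finset.card_insert_of_notMem (by simp)]
        calc α (n+1) ≤ γ * α n := hs.1 hn
          _ ≤ γ * (α 0 * γ ^ ((Finset.range n).filter succ).card *
              β₂ ^ ((Finset.range n).filter (fun k => ¬ succ k)).card) := by
                exact mul_le_mul_of_nonneg_left ih' (le_of_lt hγ0)
          _ = α 0 * γ ^ (((Finset.range n).filter succ).card + 1) *
              β₂ ^ ((Finset.range n).filter (fun k => ¬ succ k)).card := by ring
      · simp only [hn, not_false_iff, if_true, if_false]
        rw [Finset.card_insert_of_notMem (by simp)]
        calc α (n+1) ≤ β₂ * α n := hs.2 hn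
          _ ≤ β₂ * (α 0 * γ ^ ((Finset.range n).filter succ).card *
              β₂ ^ ((Finset.range n).filter (fun k => ¬ succ k)).card) := by
                exact mul_le_mul_of_nonneg_left ih' (le_of_lt hβ₂0)
          _ = α 0 * γ ^ ((Finset.range n).filter succ).card *
              β₂ ^ (((Finset.range n).filter (fun k => ¬ succ k)).card + 1) := by ring
  refine ⟨main, fun hge => ?_⟩
  set s : ℕ := ((Finset.range N).filter succ).card
  set u : ℕ := ((Finset.range N).filter (fun k => ¬ succ k)).card
  set c : ℝ := β₁ * L₂ * ε ^ (1 / min (p - 1) 1) with hc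
  have hc0 : 0 < c := by
    have : (0:ℝ) < ε ^ (1 / min (p - 1) 1) := Real.rpow_pos_of_pos hε _
    positivity
  have hlog : Real.log c ≤ Real.log (α 0) + s * Real.log γ + u * Real.log β₂ := by
    have h1 : Real.log c ≤ Real.log (α 0 * γ ^ s * β₂ ^ u) :=
      Real.log_le_log hc0 (le_trans hge main)
    have h2 : Real.log (α 0 * γ ^ s * β₂ ^ u)
        = Real.log (α 0) + s * Real.log γ + u * Real.log β₂ := by
      rw [Real.log_mul (by positivity) (by positivity),
        Real.log_mul (by positivity) (by positivity),
        Real.log_pow, Real.log_pow]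
    linarith
  have hlb : Real.log β₂ < 0 := Real.log_neg hβ₂0 hβ₂
  have h2 : (u : ℝ) * Real.log β₂ ≥ Real.log c - Real.log (α 0) - s * Real.log γ := by
    linarith
  have h3 : (u : ℝ) ≤ (Real.log c - Real.log (α 0) - s * Real.log γ) / Real.log β₂ := by
    rw [le_div_iff_of_neg hlb]
    exact h2
  calc (u : ℝ) ≤ (Real.log c - Real.log (α 0) - s * Real.log γ) / Real.log β₂ := h3
    _ = -(Real.log γ / Real.log β₂) * s - Real.log (α 0) / Real.log β₂
        + Real.log c / Real.log β₂ := by field_simp; ring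
end
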